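/- Under the saturated marginal structural model setup, fix β* ∈ ℝ and suppose Λ : ℝ → ℝ is nondecreasing and right-continuous with Λ(0) = 0, and its Lebesgue–Stieltjes measure μ_Λ satisfies, for every t ∈ [0,τ], F₀(t) + F₁(t) = ∫_{(0,t]} (S₀(u) + e^{β*}S₁(u)) dμ_Λ(u). Then Λ(t) = ∫₀^t (f₀(u)+f₁(u))/(S₀(u)+e^{β*}S₁(u)) du for every t ∈ [0,τ]; i.e., the baseline cumulative hazard Λ*(t) = ∫₀^t (f₀+f₁)/(S₀+e^{β*}S₁) is the unique solution of the first population estimating equation. -/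

import Mathlib

open MeasureTheory Filter

/-- Potential-outcome survival function `S_a(t) = exp(-∫₀ᵗ e^{β(u)·a} λ₀(u) du)`. -/
noncomputable def Ssurv (lam0 bet : ℝ → ℝ) (a t : ℝ) : ℝ :=
  Real.exp (-(∫ u in (0:ℝ)..t, Real.exp (bet u * a) * lam0 u))

/-- Potential-outcome density `f_a(t) = e^{β(t)·a} λ₀(t) S_a(t)`. -/
noncomputable def fdens (lam0 bet : ℝ → ℝ) (a t : ℝ) : ℝ :=
  Real.exp (bet t * a) * lam0 t * Ssurv lam0 bet a t

/-- `ℰ(b,t) = e^b S₁(t) / (S₀(t) + e^b S₁(t))`. -/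
noncomputable def Efun (lam0 bet : ℝ → ℝ) (b t : ℝ) : ℝ :=
  Real.exp b * Ssurv lam0 bet 1 t /
    (Ssurv lam0 bet 0 t + Real.exp b * Ssurv lam0 bet 1 t)

/-- Population full-data estimating function
`h(b) = ∫₀^τ (ℰ(β(t),t) - ℰ(b,t)) (f₀(t) + f₁(t)) dt`. -/
noncomputable def hfun (τ : ℝ) (lam0 bet : ℝ → ℝ) (b : ℝ) : ℝ :=
  ∫ t in (0:ℝ)..τ,
    (Efun lam0 bet (bet t) t - Efun lam0 bet b t) *
      (fdens lam0 bet 0 t + fdens lam0 bet 1 t)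


open Set intervalIntegral

set_option maxHeartbeats 1000000 in
lemma factA (τ : ℝ) (h : ℝ → ℝ) (hnn : ∀ u, 0 ≤ h u)
    (hint : IntegrableOn h (Set.Icc 0 τ)) {t : ℝ} (ht : t ∈ Set.Icc (0:ℝ) τ) :
    ∫ u in (0:ℝ)..t, h u * Real.exp (-(∫ v in (0:ℝ)..u, h v))
      = 1 - Real.exp (-(∫ v in (0:ℝ)..t, h v)) := by
  obtain ⟨ht0, htτ⟩ := ht
  have hτ0 : (0:ℝ) ≤ τ := le_trans ht0 htτ
  set H : ℝ → ℝ := fun u => ∫ v in (0:ℝ)..u, h v with hHdef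
  -- interval integrability of h between points of [0,τ]
  have hII : ∀ s u : ℝ, s ∈ Set.Icc (0:ℝ) τ → u ∈ Set.Icc (0:ℝ) τ →
      IntervalIntegrable h volume s u := by
    intro s u hs hu
    refine (hint.mono_set ?_).intervalIntegrable
    rw [← Set.uIcc_of_le hτ0]
    exact Set.uIcc_subset_uIcc (by rwa [Set.uIcc_of_le hτ0]) (by rwa [Set.uIcc_of_le hτ0])
  -- monotonicity of H
  have hHmono : ∀ s u : ℝ, 0 ≤ s → s ≤ u → u ≤ τ → H s ≤ H u := by
    intro s u h0s hsu huτ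
    have hs : s ∈ Set.Icc (0:ℝ) τ := ⟨h0s, hsu.trans huτ⟩
    have hu : u ∈ Set.Icc (0:ℝ) τ := ⟨h0s.trans hsu, huτ⟩
    have h1 : H s + ∫ v in s..u, h v = H u :=
      integral_add_adjacent_intervals (hII 0 s ⟨le_rfl, hτ0⟩ hs) (hII s u hs hu)
    have h2 : 0 ≤ ∫ v in s..u, h v :=
      intervalIntegral.integral_nonneg hsu (fun x _ => hnn x)
    linarith
  have hH0 : H 0 = 0 := intervalIntegral.integral_same
  have hHnn : ∀ u : ℝ, 0 ≤ u → u ≤ τ → 0 ≤ H u := by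
    intro u h0 h1; rw [← hH0]; exact hHmono 0 u le_rfl h0 h1
  -- continuity of H on [0,τ]
  have hHcont : ContinuousOn H (Set.Icc 0 τ) := by
    have := continuousOn_primitive_interval (a := 0) (b := τ) (μ := volume) (f := h) ?_
    · rwa [Set.uIcc_of_le hτ0] at this
    · rwa [Set.uIcc_of_le hτ0]
  -- integrability of the integrand
  have hG : IntegrableOn (fun u => h u * Real.exp (-(H u))) (Set.Icc 0 τ) := by
    have hexp_meas : AEStronglyMeasurable (fun u => Real.exp (-(H u)))
        (volume.restrict (Set.Icc (0:ℝ) τ)) :=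
      (Real.continuous_exp.comp_continuousOn hHcont.neg).aestronglyMeasurable
        measurableSet_Icc
    have hb : ∀ᵐ u ∂(volume.restrict (Set.Icc (0:ℝ) τ)), ‖Real.exp (-(H u))‖ ≤ 1 := by
      refine (ae_restrict_iff' measurableSet_Icc).2 (ae_of_all _ fun u hu => ?_)
      rw [Real.norm_eq_abs, abs_of_pos (Real.exp_pos _)]
      exact Real.exp_le_one_iff.2 (neg_nonpos.2 (hHnn u hu.1 hu.2))
    have h2 := hint.bdd_mul (f := fun u => Real.exp (-(H u))) (c := 1) hexp_meas hb
    exact IntegrableOn.congr_fun h2 (fun u _ => mul_comm _ _) measurableSet_Icc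
  have hGII : ∀ s u : ℝ, s ∈ Set.Icc (0:ℝ) τ → u ∈ Set.Icc (0:ℝ) τ →
      IntervalIntegrable (fun v => h v * Real.exp (-(H v))) volume s u := by
    intro s u hs hu
    refine (hG.mono_set ?_).intervalIntegrable
    rw [← Set.uIcc_of_le hτ0]
    exact Set.uIcc_subset_uIcc (by rwa [Set.uIcc_of_le hτ0]) (by rwa [Set.uIcc_of_le hτ0])
  set Φ : ℝ → ℝ := fun x => Real.exp (-(H x)) + ∫ v in (0:ℝ)..x, h v * Real.exp (-(H v))
    with hΦdef
  have hΦ0 : Φ 0 = 1 := by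
    simp [hΦdef, hH0]
  -- key increment bound
  have key : ∀ s u : ℝ, 0 ≤ s → s ≤ u → u ≤ τ → |Φ u - Φ s| ≤ 2 * (H u - H s)^2 := by
    intro s u h0s hsu huτ
    have hs : s ∈ Set.Icc (0:ℝ) τ := ⟨h0s, hsu.trans huτ⟩
    have hu : u ∈ Set.Icc (0:ℝ) τ := ⟨h0s.trans hsu, huτ⟩
    set Δ : ℝ := H u - H s with hΔ
    have hΔ0 : 0 ≤ Δ := sub_nonneg.2 (hHmono s u h0s hsu huτ)
    set A : ℝ := Real.exp (-(H s)) with hA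
    have hA1 : A ≤ 1 := Real.exp_le_one_iff.2 (neg_nonpos.2 (hHnn s h0s (hsu.trans huτ)))
    have hApos : 0 < A := Real.exp_pos _
    have hHu : Real.exp (-(H u)) = A * Real.exp (-Δ) := by
      rw [hA, ← Real.exp_add]; congr 1; rw [hΔ]; ring
    have hΔeq : (∫ x in s..u, h x) = Δ := by
      have h1 : H s + ∫ v in s..u, h v = H u :=
        integral_add_adjacent_intervals (hII 0 s ⟨le_rfl, hτ0⟩ hs) (hII s u hs hu)
      rw [hΔ]; linarith
    -- split the integral
    have hsplit : Φ u - Φ s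
        = (Real.exp (-(H u)) - A) + ∫ v in s..u, h v * Real.exp (-(H v)) := by
      have h1 : (∫ v in (0:ℝ)..s, h v * Real.exp (-(H v)))
          + ∫ v in s..u, h v * Real.exp (-(H v))
          = ∫ v in (0:ℝ)..u, h v * Real.exp (-(H v)) :=
        integral_add_adjacent_intervals (hGII 0 s ⟨le_rfl, hτ0⟩ hs) (hGII s u hs hu)
      simp only [hΦdef]; linarith
    -- bounds on the middle integral
    have hlow : A * Real.exp (-Δ) * Δ ≤ ∫ v in s..u, h v * Real.exp (-(H v)) := by
      have : ∫ v in s..u, h v * (A * Real.exp (-Δ)) ≤ ∫ v in s..u, h v * Real.exp (-(H v)) := by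
        refine intervalIntegral.integral_mono_on hsu ((hII s u hs hu).mul_const _)
          (hGII s u hs hu) (fun x hx => ?_)
        refine mul_le_mul_of_nonneg_left ?_ (hnn x)
        rw [← hHu]
        exact Real.exp_le_exp.2 (neg_le_neg (hHmono x u (h0s.trans hx.1) hx.2 huτ))
      rwa [intervalIntegral.integral_mul_const, hΔeq, mul_comm] at this
    have hhigh : (∫ v in s..u, h v * Real.exp (-(H v))) ≤ A * Δ := by
      have : ∫ v in s..u, h v * Real.exp (-(H v)) ≤ ∫ v in s..u, h v * A := by
        refine intervalIntegral.integral_mono_on hsu (hGII s u hs hu)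
          ((hII s u hs hu).mul_const _) (fun x hx => ?_)
        refine mul_le_mul_of_nonneg_left ?_ (hnn x)
        exact Real.exp_le_exp.2 (neg_le_neg (hHmono s x h0s hx.1 (hx.2.trans huτ)))
      rwa [intervalIntegral.integral_mul_const, hΔeq, mul_comm Δ A] at this
    -- elementary exp bounds
    have hexp_low : 1 - Δ ≤ Real.exp (-Δ) := by
      have := Real.add_one_le_exp (-Δ); linarith
    have hq2 : Real.exp (-Δ) - 1 + Δ ≤ 2 * Δ^2 := by
      rcases le_or_gt Δ 1 with hc | hc
      · have := Real.abs_exp_sub_one_sub_id_le (x := -Δ) (by rw [abs_neg, abs_of_nonneg hΔ0]; exact hc)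
        rw [abs_le] at this
        have h2 := this.2
        have : |(-Δ)| ^ 2 = Δ^2 := by rw [abs_neg, abs_of_nonneg hΔ0]
        nlinarith [Real.exp_pos (-Δ)]
      · have h1 : Real.exp (-Δ) ≤ 1 := Real.exp_le_one_iff.2 (by linarith)
        nlinarith
    have hq_nonneg : 0 ≤ Real.exp (-Δ) - 1 + Δ := by linarith
    -- combine
    rw [hsplit, hHu, abs_le]
    constructor
    · -- lower bound
      have hql : -(Δ^2) ≤ Real.exp (-Δ) - 1 + Real.exp (-Δ) * Δ := by nlinarith
      have : A * (-(Δ^2)) ≤ A * (Real.exp (-Δ) - 1 + Real.exp (-Δ) * Δ) :=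
        mul_le_mul_of_nonneg_left hql hApos.le
      nlinarith
    · -- upper bound
      have : A * (Real.exp (-Δ) - 1 + Δ) ≤ 1 * (Real.exp (-Δ) - 1 + Δ) :=
        mul_le_mul_of_nonneg_right hA1 hq_nonneg
      nlinarith
  -- main limit argument : Φ t = 1
  have hmain : Φ t = 1 := by
    rcases eq_or_lt_of_le ht0 with h0t | h0t
    · rw [← h0t]; exact hΦ0
    have habs : ∀ ε : ℝ, 0 < ε → |Φ t - 1| ≤ ε := by
      intro ε hε
      have hHτnn : 0 ≤ H τ := hHnn τ hτ0 le_rfl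
      set ε' : ℝ := ε / (2 * (H τ + 1)) with hε'def
      have hε' : 0 < ε' := div_pos hε (by linarith)
      have ucont : UniformContinuousOn H (Set.Icc 0 τ) :=
        isCompact_Icc.uniformContinuousOn_of_continuous hHcont
      rw [Metric.uniformContinuousOn_iff] at ucont
      obtain ⟨δ, hδ, hδprop⟩ := ucont ε' hε'
      obtain ⟨n, hn⟩ := exists_nat_gt (t / δ)
      have hn0 : 0 < (n:ℝ) := lt_of_le_of_lt (div_nonneg h0t.le hδ.le) hn
      have hmesh : t / n < δ := by
        rw [div_lt_iff₀ hn0]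
        rw [div_lt_iff₀ hδ] at hn
        linarith [hn]
      set p : ℕ → ℝ := fun i => t * i / n with hpdef
      have hp0 : p 0 = 0 := by simp [hpdef]
      have hpn : p n = t := by
        rw [hpdef]; field_simp [hn0.ne']
      have hpmem : ∀ i : ℕ, i ≤ n → p i ∈ Set.Icc (0:ℝ) τ := by
        intro i hi
        constructor
        · exact div_nonneg (mul_nonneg h0t.le (Nat.cast_nonneg i)) hn0.le
        · have : p i ≤ t := by
            rw [hpdef, div_le_iff₀ hn0]
            have : (i:ℝ) ≤ n := Nat.cast_le.2 hi
            nlinarith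
          linarith
      have hpstep : ∀ i : ℕ, p (i+1) - p i = t / n := by
        intro i
        rw [hpdef]
        push_cast
        field_simp
        ring
      have hpmono : ∀ i : ℕ, p i ≤ p (i+1) := by
        intro i
        have := hpstep i
        have h2 : 0 ≤ t / n := div_nonneg h0t.le hn0.le
        linarith
      have hΔbound : ∀ i : ℕ, i < n → H (p (i+1)) - H (p i) < ε' := by
        intro i hi
        have h1 := hpmem i hi.le
        have h2 := hpmem (i+1) hi
        have hd : dist (p (i+1)) (p i) < δ := by
          rw [Real.dist_eq, hpstep i, abs_of_nonneg (div_nonneg h0t.le hn0.le)]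
          exact hmesh
        have := hδprop _ h2 _ h1 hd
        rw [Real.dist_eq] at this
        calc H (p (i+1)) - H (p i) ≤ |H (p (i+1)) - H (p i)| := le_abs_self _
          _ < ε' := this
      have hΔnn : ∀ i : ℕ, i < n → 0 ≤ H (p (i+1)) - H (p i) := by
        intro i hi
        have h1 := hpmem i hi.le
        have h2 := hpmem (i+1) hi
        linarith [hHmono (p i) (p (i+1)) h1.1 (hpmono i) h2.2]
      have htel : Φ t - 1 = ∑ i ∈ Finset.range n, (Φ (p (i+1)) - Φ (p i)) := by
        rw [Finset.sum_range_sub (fun i => Φ (p i)), hp0, hpn, hΦ0]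
      have htelH : ∑ i ∈ Finset.range n, (H (p (i+1)) - H (p i)) = H t := by
        rw [Finset.sum_range_sub (fun i => H (p i)), hp0, hpn, hH0, sub_zero]
      calc |Φ t - 1| = |∑ i ∈ Finset.range n, (Φ (p (i+1)) - Φ (p i))| := by rw [htel]
        _ ≤ ∑ i ∈ Finset.range n, |Φ (p (i+1)) - Φ (p i)| := Finset.abs_sum_le_sum_abs _ _
        _ ≤ ∑ i ∈ Finset.range n, 2 * ε' * (H (p (i+1)) - H (p i)) := by
            refine Finset.sum_le_sum (fun i hi => ?_)
            have hi' := Finset.mem_range.1 hi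
            have h1 := hpmem i hi'.le
            have h2 := hpmem (i+1) hi'
            have hk := key (p i) (p (i+1)) h1.1 (hpmono i) h2.2
            have hb := hΔbound i hi'
            have hnn' := hΔnn i hi'
            nlinarith
        _ = 2 * ε' * H t := by rw [← Finset.mul_sum, htelH]
        _ ≤ ε := by
            have hHt : H t ≤ H τ := hHmono t τ ht0 htτ le_rfl
            have h1 : ε' * (2 * (H τ + 1)) = ε := by
              rw [hε'def]; field_simp
            have h2 : ε' * (2 * H t) ≤ ε' * (2 * (H τ + 1)) :=
              mul_le_mul_of_nonneg_left (by linarith) hε'.le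
            nlinarith [h1, h2]
    by_contra hne
    have : 0 < |Φ t - 1| := abs_pos.2 (sub_ne_zero.2 hne)
    have := habs (|Φ t - 1| / 2) (by linarith)
    linarith
  have := hmain
  simp only [hΦdef] at this
  linarith

set_option maxHeartbeats 1000000 in
lemma stage2 (τ : ℝ) (hτ0 : (0:ℝ) ≤ τ) (g F : ℝ → ℝ) (μ : Measure ℝ) (M : ℝ)
    (hμfin : ∀ b : ℝ, μ (Set.Ioc 0 b) < ⊤)
    (hgcont : ContinuousOn g (Set.Icc 0 τ))
    (hgpos : ∀ u, 0 < g u)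
    (hgle : ∀ u ∈ Set.Icc (0:ℝ) τ, g u ≤ M)
    (hF_nn : ∀ u, 0 ≤ F u)
    (hF_int : IntegrableOn F (Set.Icc 0 τ))
    (hF_aem : AEMeasurable F (volume.restrict (Set.Ioc 0 τ)))
    (heq' : ∀ b ∈ Set.Icc (0:ℝ) τ, (∫ u in Set.Ioc 0 b, g u ∂μ) = ∫ u in Set.Ioc 0 b, F u) :
    ∀ t ∈ Set.Icc (0:ℝ) τ, (μ (Set.Ioc 0 t)).toReal = ∫ u in (0:ℝ)..t, F u / g u := by
  have hsub : ∀ {b : ℝ}, b ≤ τ → Set.Ioc (0:ℝ) b ⊆ Set.Icc 0 τ :=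
    fun {b} hb x hx => ⟨hx.1.le, hx.2.trans hb⟩
  have hg_aesm : ∀ (ν : Measure ℝ) {s : Set ℝ}, MeasurableSet s → s ⊆ Set.Icc (0:ℝ) τ →
      AEStronglyMeasurable g (ν.restrict s) :=
    fun ν s hs hss => (hgcont.mono hss).aestronglyMeasurable hs
  -- integrability of g w.r.t. μ on Ioc 0 b
  have hgi : ∀ b : ℝ, b ≤ τ → IntegrableOn g (Set.Ioc 0 b) μ := by
    intro b hb
    haveI : IsFiniteMeasure (μ.restrict (Set.Ioc 0 b)) :=
      ⟨by rw [Measure.restrict_apply_univ]; exact hμfin b⟩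
    refine Integrable.mono' (integrable_const M) (hg_aesm μ measurableSet_Ioc (hsub hb)) ?_
    refine (ae_restrict_iff' measurableSet_Ioc).2 (ae_of_all _ fun u hu => ?_)
    rw [Real.norm_eq_abs, abs_of_pos (hgpos u)]
    exact hgle u (hsub hb hu)
  -- the two withDensity measures agree
  have hνeq : (μ.restrict (Set.Ioc 0 τ)).withDensity (fun u => ENNReal.ofReal (g u))
      = (volume.restrict (Set.Ioc 0 τ)).withDensity (fun u => ENNReal.ofReal (F u)) := by
    haveI : IsFiniteMeasure
        ((μ.restrict (Set.Ioc 0 τ)).withDensity (fun u => ENNReal.ofReal (g u))) := by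
      constructor
      rw [withDensity_apply _ MeasurableSet.univ, Measure.restrict_univ]
      have hb : ∀ᵐ u ∂(μ.restrict (Set.Ioc 0 τ)),
          ENNReal.ofReal (g u) ≤ ENNReal.ofReal M :=
        (ae_restrict_iff' measurableSet_Ioc).2 (ae_of_all _ fun u hu =>
          ENNReal.ofReal_le_ofReal (hgle u (hsub le_rfl hu)))
      calc ∫⁻ u, ENNReal.ofReal (g u) ∂(μ.restrict (Set.Ioc 0 τ))
          ≤ ∫⁻ _, ENNReal.ofReal M ∂(μ.restrict (Set.Ioc 0 τ)) := lintegral_mono_ae hb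
        _ = ENNReal.ofReal M * μ (Set.Ioc 0 τ) := by
            rw [lintegral_const, Measure.restrict_apply_univ]
        _ < ⊤ := ENNReal.mul_lt_top ENNReal.ofReal_lt_top (hμfin τ)
    refine Measure.ext_of_Iic _ _ (fun a => ?_)
    rw [withDensity_apply _ measurableSet_Iic, withDensity_apply _ measurableSet_Iic,
        Measure.restrict_restrict measurableSet_Iic, Measure.restrict_restrict measurableSet_Iic,
        Set.inter_comm, Set.Ioc_inter_Iic]
    set b : ℝ := min τ a with hbdef
    rcases le_or_gt b 0 with hb0 | hb0
    · rw [Set.Ioc_eq_empty (by simpa using hb0.not_gt), Measure.restrict_empty]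
      simp
    · have hbτ : b ≤ τ := min_le_left _ _
      have hbmem : b ∈ Set.Icc (0:ℝ) τ := ⟨hb0.le, hbτ⟩
      have hFi : IntegrableOn F (Set.Ioc 0 b) volume := hF_int.mono_set (hsub hbτ)
      rw [← ofReal_integral_eq_lintegral_ofReal (hgi b hbτ)
          (ae_of_all _ fun u => (hgpos u).le),
        ← ofReal_integral_eq_lintegral_ofReal hFi (ae_of_all _ fun u => hF_nn u),
        heq' b hbmem]
  -- final computation
  intro t ht
  have htτ := ht.2
  have hrr : ∀ ν : Measure ℝ, (ν.restrict (Set.Ioc 0 τ)).restrict (Set.Ioc 0 t)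
      = ν.restrict (Set.Ioc 0 t) := by
    intro ν
    rw [Measure.restrict_restrict measurableSet_Ioc, Set.Ioc_inter_Ioc]
    simp [min_eq_left htτ]
  have h1ginv_aem : ∀ (ν : Measure ℝ) {s : Set ℝ}, MeasurableSet s → s ⊆ Set.Icc (0:ℝ) τ →
      AEMeasurable (fun u => ENNReal.ofReal (1 / g u)) (ν.restrict s) := by
    intro ν s hs hss
    exact ENNReal.measurable_ofReal.comp_aemeasurable
      (((continuousOn_const.div (hgcont.mono hss) (fun x hx => (hgpos x).ne'))).aemeasurable hs)
  have hg_aem : AEMeasurable (fun u => ENNReal.ofReal (g u)) (μ.restrict (Set.Ioc 0 τ)) :=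
    ENNReal.measurable_ofReal.comp_aemeasurable
      ((hg_aesm μ measurableSet_Ioc (hsub le_rfl)).aemeasurable)
  have hF_aem' : AEMeasurable (fun u => ENNReal.ofReal (F u)) (volume.restrict (Set.Ioc 0 τ)) :=
    ENNReal.measurable_ofReal.comp_aemeasurable hF_aem
  have step1 : μ (Set.Ioc 0 t)
      = ∫⁻ u in Set.Ioc 0 t, ENNReal.ofReal (1 / g u) * ENNReal.ofReal (g u) ∂μ := by
    rw [← setLIntegral_one]
    refine setLIntegral_congr_fun measurableSet_Ioc (fun u _ => ?_)
    rw [← ENNReal.ofReal_mul (one_div_nonneg.2 (hgpos u).le), one_div, inv_mul_cancel₀ (hgpos u).ne',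
      ENNReal.ofReal_one]
  have hcollapseμ : ∀ f : ℝ → ENNReal, (∫⁻ u in Set.Ioc 0 t, f u ∂(μ.restrict (Set.Ioc 0 τ)))
      = ∫⁻ u in Set.Ioc 0 t, f u ∂μ := by
    intro f
    rw [Measure.restrict_restrict measurableSet_Ioc, Set.Ioc_inter_Ioc]
    simp [min_eq_left htτ]
  have hcollapsev : ∀ f : ℝ → ENNReal, (∫⁻ u in Set.Ioc 0 t, f u ∂(volume.restrict (Set.Ioc 0 τ)))
      = ∫⁻ u in Set.Ioc 0 t, f u ∂volume := by
    intro f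
    rw [Measure.restrict_restrict measurableSet_Ioc, Set.Ioc_inter_Ioc]
    simp [min_eq_left htτ]
  have step2 : ∫⁻ u in Set.Ioc 0 t, ENNReal.ofReal (1 / g u) * ENNReal.ofReal (g u) ∂μ
      = ∫⁻ u in Set.Ioc 0 t, ENNReal.ofReal (1 / g u)
          ∂((μ.restrict (Set.Ioc 0 τ)).withDensity (fun u => ENNReal.ofReal (g u))) := by
    rw [setLIntegral_withDensity_eq_lintegral_mul₀' hg_aem
      ((h1ginv_aem μ measurableSet_Ioc (hsub le_rfl)).mono'
        (withDensity_absolutelyContinuous _ _)) measurableSet_Ioc]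
    rw [hcollapseμ]
    refine setLIntegral_congr_fun measurableSet_Ioc (fun u _ => ?_)
    simp [mul_comm]
  have step3 : ∫⁻ u in Set.Ioc 0 t, ENNReal.ofReal (1 / g u)
          ∂((volume.restrict (Set.Ioc 0 τ)).withDensity (fun u => ENNReal.ofReal (F u)))
      = ∫⁻ u in Set.Ioc 0 t, ENNReal.ofReal (F u / g u) ∂volume := by
    rw [setLIntegral_withDensity_eq_lintegral_mul₀' hF_aem'
      ((h1ginv_aem volume measurableSet_Ioc (hsub le_rfl)).mono'
        (withDensity_absolutelyContinuous _ _)) measurableSet_Ioc]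
    rw [hcollapsev]
    refine setLIntegral_congr_fun measurableSet_Ioc (fun u _ => ?_)
    simp only [Pi.mul_apply]
    rw [← ENNReal.ofReal_mul (hF_nn u), mul_one_div]
  have hFg_int : IntegrableOn (fun u => F u / g u) (Set.Ioc 0 t) volume := by
    obtain ⟨C, hC⟩ := isCompact_Icc.exists_bound_of_continuousOn
      (continuousOn_const.div hgcont (fun x _ => (hgpos x).ne'))
    have haesm : AEStronglyMeasurable (fun u => 1 / g u) (volume.restrict (Set.Ioc 0 t)) :=
      ((continuousOn_const.div (hgcont.mono (hsub htτ))
        fun x _ => (hgpos x).ne')).aestronglyMeasurable measurableSet_Ioc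
    have h2 := (hF_int.mono_set (hsub htτ)).bdd_mul (c := C) haesm
      ((ae_restrict_iff' measurableSet_Ioc).2 (ae_of_all _ fun u hu => hC u (hsub htτ hu)))
    exact IntegrableOn.congr_fun h2 (fun u _ => by rw [one_div_mul_eq_div]) measurableSet_Ioc
  have step4 : ∫⁻ u in Set.Ioc 0 t, ENNReal.ofReal (F u / g u) ∂volume
      = ENNReal.ofReal (∫ u in Set.Ioc 0 t, F u / g u) :=
    (ofReal_integral_eq_lintegral_ofReal hFg_int
      (ae_of_all _ fun u => div_nonneg (hF_nn u) (hgpos u).le)).symm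
  rw [step1, step2, hνeq, step3, step4, ENNReal.toReal_ofReal
    (setIntegral_nonneg measurableSet_Ioc fun u _ => div_nonneg (hF_nn u) (hgpos u).le),
    intervalIntegral.integral_of_le ht.1]

set_option maxHeartbeats 1000000 in
/-- Uniqueness of the baseline cumulative hazard: if `Λ` is nondecreasing, right-continuous
with `Λ(0) = 0` (a Stieltjes function) and its Lebesgue–Stieltjes measure `μ_Λ` satisfies
`F₀(t) + F₁(t) = ∫_{(0,t]} (S₀(u) + e^{β*} S₁(u)) dμ_Λ(u)` for every `t ∈ [0,τ]`, then
`Λ(t) = ∫₀ᵗ (f₀(u)+f₁(u))/(S₀(u)+e^{β*}S₁(u)) du` for every `t ∈ [0,τ]`. -/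
theorem baseline_cumulative_hazard_unique
    (τ : ℝ) (hτ : 0 < τ) (lam0 bet : ℝ → ℝ) (bstar : ℝ)
    (hlam_meas : Measurable lam0) (hbet_meas : Measurable bet)
    (hlam_nonneg : ∀ t, 0 ≤ lam0 t)
    (hlam_int : IntegrableOn lam0 (Set.Icc 0 τ))
    (hbetlam_int : IntegrableOn (fun t => Real.exp (bet t) * lam0 t) (Set.Icc 0 τ))
    (Λ : StieltjesFunction ℝ) (hΛ0 : Λ 0 = 0)
    (heq : ∀ t ∈ Set.Icc (0:ℝ) τ,
      ((1 - Ssurv lam0 bet 0 t) + (1 - Ssurv lam0 bet 1 t))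
        = ∫ u in Set.Ioc (0:ℝ) t,
            (Ssurv lam0 bet 0 u + Real.exp bstar * Ssurv lam0 bet 1 u) ∂Λ.measure) :
    ∀ t ∈ Set.Icc (0:ℝ) τ,
      Λ t = ∫ u in (0:ℝ)..t,
        (fdens lam0 bet 0 u + fdens lam0 bet 1 u) /
          (Ssurv lam0 bet 0 u + Real.exp bstar * Ssurv lam0 bet 1 u) := by
  intro t ht
  have hτ0 : (0:ℝ) ≤ τ := hτ.le
  have hnn0 : ∀ u, 0 ≤ Real.exp (bet u * 0) * lam0 u :=
    fun u => mul_nonneg (Real.exp_pos _).le (hlam_nonneg u)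
  have hnn1 : ∀ u, 0 ≤ Real.exp (bet u * 1) * lam0 u :=
    fun u => mul_nonneg (Real.exp_pos _).le (hlam_nonneg u)
  have hint0 : IntegrableOn (fun u => Real.exp (bet u * 0) * lam0 u) (Set.Icc 0 τ) :=
    hlam_int.congr_fun (fun u _ => by simp) measurableSet_Icc
  have hint1 : IntegrableOn (fun u => Real.exp (bet u * 1) * lam0 u) (Set.Icc 0 τ) :=
    hbetlam_int.congr_fun (fun u _ => by simp) measurableSet_Icc
  have hmeas0 : Measurable fun u => Real.exp (bet u * 0) * lam0 u :=
    ((hbet_meas.mul_const 0).exp).mul hlam_meas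
  have hmeas1 : Measurable fun u => Real.exp (bet u * 1) * lam0 u :=
    ((hbet_meas.mul_const 1).exp).mul hlam_meas
  have hScont : ∀ (a : ℝ), IntegrableOn (fun u => Real.exp (bet u * a) * lam0 u) (Set.Icc 0 τ) →
      ContinuousOn (fun u => Ssurv lam0 bet a u) (Set.Icc 0 τ) := by
    intro a hia
    have h1 : ContinuousOn (fun u => ∫ v in (0:ℝ)..u, Real.exp (bet v * a) * lam0 v)
        (Set.Icc 0 τ) := by
      have h2 := intervalIntegral.continuousOn_primitive_interval (a := (0:ℝ)) (b := τ)
        (μ := volume) (f := fun v => Real.exp (bet v * a) * lam0 v) (by rwa [Set.uIcc_of_le hτ0])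
      rwa [Set.uIcc_of_le hτ0] at h2
    exact (Real.continuous_exp.comp_continuousOn h1.neg)
  have hSpos : ∀ (a u : ℝ), 0 < Ssurv lam0 bet a u := fun a u => Real.exp_pos _
  have hSle1 : ∀ (a : ℝ), ∀ u ∈ Set.Icc (0:ℝ) τ, Ssurv lam0 bet a u ≤ 1 := by
    intro a u hu
    have h1 : 0 ≤ ∫ v in (0:ℝ)..u, Real.exp (bet v * a) * lam0 v :=
      intervalIntegral.integral_nonneg hu.1
        (fun x _ => mul_nonneg (Real.exp_pos _).le (hlam_nonneg x))
    simpa [Ssurv] using Real.exp_le_one_iff.2 (neg_nonpos.2 h1)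
  have hgpos : ∀ u, 0 < Ssurv lam0 bet 0 u + Real.exp bstar * Ssurv lam0 bet 1 u :=
    fun u => add_pos (hSpos 0 u) (mul_pos (Real.exp_pos _) (hSpos 1 u))
  have hgcont : ContinuousOn
      (fun u => Ssurv lam0 bet 0 u + Real.exp bstar * Ssurv lam0 bet 1 u) (Set.Icc 0 τ) :=
    (hScont 0 hint0).add (continuousOn_const.mul (hScont 1 hint1))
  have hgle : ∀ u ∈ Set.Icc (0:ℝ) τ,
      Ssurv lam0 bet 0 u + Real.exp bstar * Ssurv lam0 bet 1 u ≤ 1 + Real.exp bstar := by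
    intro u hu
    have h1 := hSle1 0 u hu
    have h2 := hSle1 1 u hu
    have h3 := (Real.exp_pos bstar).le
    nlinarith [hSpos 1 u]
  have hfd_int : ∀ (a : ℝ), IntegrableOn (fun u => Real.exp (bet u * a) * lam0 u) (Set.Icc 0 τ) →
      IntegrableOn (fun u => fdens lam0 bet a u) (Set.Icc 0 τ) := by
    intro a hia
    have hmeasS : AEStronglyMeasurable (fun u => Ssurv lam0 bet a u)
        (volume.restrict (Set.Icc (0:ℝ) τ)) :=
      (hScont a hia).aestronglyMeasurable measurableSet_Icc
    have hb : ∀ᵐ u ∂(volume.restrict (Set.Icc (0:ℝ) τ)), ‖Ssurv lam0 bet a u‖ ≤ 1 := by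
      refine (ae_restrict_iff' measurableSet_Icc).2 (ae_of_all _ fun u hu => ?_)
      rw [Real.norm_eq_abs, abs_of_pos (hSpos a u)]
      exact hSle1 a u hu
    have h2 := hia.bdd_mul (c := 1) hmeasS hb
    refine IntegrableOn.congr_fun h2 (fun u _ => ?_) measurableSet_Icc
    simp only [fdens]; ring
  have hF_int : IntegrableOn (fun u => fdens lam0 bet 0 u + fdens lam0 bet 1 u)
      (Set.Icc 0 τ) := (hfd_int 0 hint0).add (hfd_int 1 hint1)
  have hfd_nn : ∀ (a u : ℝ), 0 ≤ fdens lam0 bet a u :=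
    fun a u => mul_nonneg (mul_nonneg (Real.exp_pos _).le (hlam_nonneg u)) (hSpos a u).le
  have hF_nn : ∀ u, 0 ≤ fdens lam0 bet 0 u + fdens lam0 bet 1 u :=
    fun u => add_nonneg (hfd_nn 0 u) (hfd_nn 1 u)
  have hF_aem : AEMeasurable (fun u => fdens lam0 bet 0 u + fdens lam0 bet 1 u)
      (volume.restrict (Set.Ioc 0 τ)) := by
    have h0 := (((hScont 0 hint0).mono Set.Ioc_subset_Icc_self).aemeasurable
      measurableSet_Ioc (μ := volume))
    have h1 := (((hScont 1 hint1).mono Set.Ioc_subset_Icc_self).aemeasurable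
      measurableSet_Ioc (μ := volume))
    exact ((hmeas0.aemeasurable.mul h0).add (hmeas1.aemeasurable.mul h1))
  have hcdf : ∀ b ∈ Set.Icc (0:ℝ) τ,
      (∫ u in (0:ℝ)..b, (fdens lam0 bet 0 u + fdens lam0 bet 1 u))
        = (1 - Ssurv lam0 bet 0 b) + (1 - Ssurv lam0 bet 1 b) := by
    intro b hb
    have h0 := factA τ (fun u => Real.exp (bet u * 0) * lam0 u) hnn0 hint0 hb
    have h1 := factA τ (fun u => Real.exp (bet u * 1) * lam0 u) hnn1 hint1 hb
    have hi0 : IntervalIntegrable (fun u => fdens lam0 bet 0 u) volume 0 b := by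
      refine ((hfd_int 0 hint0).mono_set ?_).intervalIntegrable
      rw [← Set.uIcc_of_le hτ0]
      exact Set.uIcc_subset_uIcc (by rw [Set.uIcc_of_le hτ0]; exact ⟨le_rfl, hτ0⟩)
        (by rwa [Set.uIcc_of_le hτ0])
    have hi1 : IntervalIntegrable (fun u => fdens lam0 bet 1 u) volume 0 b := by
      refine ((hfd_int 1 hint1).mono_set ?_).intervalIntegrable
      rw [← Set.uIcc_of_le hτ0]
      exact Set.uIcc_subset_uIcc (by rw [Set.uIcc_of_le hτ0]; exact ⟨le_rfl, hτ0⟩)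
        (by rwa [Set.uIcc_of_le hτ0])
    rw [intervalIntegral.integral_add hi0 hi1]
    simp only [Ssurv, fdens] at h0 h1 ⊢
    rw [h0, h1]
  have hμfin : ∀ b : ℝ, Λ.measure (Set.Ioc 0 b) < ⊤ := by
    intro b; rw [Λ.measure_Ioc]; exact ENNReal.ofReal_lt_top
  have heq'' : ∀ b ∈ Set.Icc (0:ℝ) τ,
      (∫ u in Set.Ioc 0 b,
        (Ssurv lam0 bet 0 u + Real.exp bstar * Ssurv lam0 bet 1 u) ∂Λ.measure)
        = ∫ u in Set.Ioc 0 b, (fdens lam0 bet 0 u + fdens lam0 bet 1 u) := by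
    intro b hb
    rw [← heq b hb, ← intervalIntegral.integral_of_le hb.1, hcdf b hb]
  have hmain := stage2 τ hτ0 _ _ Λ.measure (1 + Real.exp bstar) hμfin hgcont hgpos hgle
    hF_nn hF_int hF_aem heq'' t ht
  have hΛt : Λ t = (Λ.measure (Set.Ioc 0 t)).toReal := by
    rw [Λ.measure_Ioc, hΛ0, sub_zero, ENNReal.toReal_ofReal]
    exact le_trans (le_of_eq hΛ0.symm) (Λ.mono ht.1)
  rw [hΛt]
  exact hmain
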